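/- Let φ be an admissible error function. Then for every irrational λ ∈ [0,1] and every u ∈ D_Δ with u ≠ 0, E[φ](λ, u) = +∞. -/

import Mathlib

noncomputable section

/-- The distance of a real number to the set of integers. -/
noncomputable def dZ (x : ℝ) : ℝ := ⨅ k : ℤ, |x - (k : ℝ)|

variable {X : Type*} [AddCommGroup X] [Module ℝ X]

/-- The difference set `D_Δ = {x - y : x, y ∈ D}`. -/
def diffSet (D : Set X) : Set X := {u | ∃ x ∈ D, ∃ y ∈ D, u = x - y}

/-- The half difference set `(1/2)·D_Δ`. -/
def halfDiff (D : Set X) : Set X := {u | ∃ x ∈ D, ∃ y ∈ D, u = (2⁻¹ : ℝ) • (x - y)}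

/-- `f` is `φ`-Jensen convex on `D`. -/
def JCW (D : Set X) (φ : X → ℝ) (f : X → ℝ) : Prop :=
  ∀ x ∈ D, ∀ y ∈ D,
    f ((2⁻¹ : ℝ) • (x + y)) ≤ 2⁻¹ * f x + 2⁻¹ * f y + φ ((2⁻¹ : ℝ) • (x - y))

/-- `φ` is an admissible error function on `(1/2)·D_Δ`:
it is even there, vanishes at `0`, and admits a `φ`-Jensen convex function. -/
def Admissible (D : Set X) (φ : X → ℝ) : Prop :=
  (∀ u ∈ halfDiff D, φ (-u) = φ u) ∧ φ 0 = 0 ∧ ∃ f : X → ℝ, JCW D φ f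

/-- `φ*(u) = inf_{m ∈ ℕ, m ≥ 1} m² · φ(u/m)`, valued in `[-∞, ∞)` viewed inside `EReal`. -/
noncomputable def phiStar (φ : X → ℝ) (u : X) : EReal :=
  ⨅ m : ℕ+, ((((m : ℕ) : ℝ) ^ 2 * φ ((1 / ((m : ℕ) : ℝ)) • u) : ℝ) : EReal)

/-- The real-valued version of `φ*` (equal to `φ*` wherever `φ*` is finite). -/
noncomputable def phiStarR (φ : X → ℝ) (u : X) : ℝ := (phiStar φ u).toReal

/-- The extended error function
`E[φ](λ,u) = sup { f(λx+(1-λ)y) - λf(x) - (1-λ)f(y) : f φ-Jensen convex, x,y ∈ D, x-y = u }`. -/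
noncomputable def Eerr (D : Set X) (φ : X → ℝ) (l : ℝ) (u : X) : EReal :=
  sSup {c : EReal | ∃ f : X → ℝ, JCW D φ f ∧ ∃ x ∈ D, ∃ y ∈ D, x - y = u ∧
    c = ((f (l • x + (1 - l) • y) - l * f x - (1 - l) * f y : ℝ) : EReal)}

lemma exists_g' (l : ℝ) (hirr : Irrational l) (s : ℝ) :
    ∃ g : ℝ → ℝ, (∀ a b, g (a + b) = g a + g b) ∧ (∀ r, g (2⁻¹ * r) = g r / 2) ∧
      g 1 = 0 ∧ g l = s := by
  have hne1 : l ≠ 1 := fun h => hirr ⟨1, by simp [h]⟩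
  have hind : LinearIndependent ℚ ![(1 : ℝ), l] := by
    rw [LinearIndependent.pair_iff]
    intro a b hab
    rw [Rat.smul_def, Rat.smul_def, mul_one] at hab
    by_cases hb : b = 0
    · subst hb; simp at hab; exact ⟨by exact_mod_cast hab, rfl⟩
    · exfalso
      apply hirr
      refine ⟨-(a / b), ?_⟩
      have hb' : (b : ℝ) ≠ 0 := by exact_mod_cast hb
      push_cast
      field_simp
      linarith
  have hr : LinearIndepOn ℚ id (Set.range ![(1 : ℝ), l]) :=
    (linearIndepOn_id_range_iff hind.injective).mpr hind
  let B := Module.Basis.extend hr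
  have h1 : (1 : ℝ) ∈ hr.extend (Set.subset_univ _) := hr.subset_extend _ ⟨0, rfl⟩
  have hl2 : l ∈ hr.extend (Set.subset_univ _) := hr.subset_extend _ ⟨1, rfl⟩
  set i : ↥(hr.extend (Set.subset_univ _)) := ⟨l, hl2⟩ with hi
  set j : ↥(hr.extend (Set.subset_univ _)) := ⟨(1 : ℝ), h1⟩ with hj
  have hij : i ≠ j := by
    intro h
    exact hne1 (by simpa [hi, hj, Subtype.ext_iff] using h)
  refine ⟨fun r => ((B.coord i r : ℚ) : ℝ) * s, ?_, ?_, ?_, ?_⟩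
  · intro a b
    show ((B.coord i (a + b) : ℚ) : ℝ) * s = _
    rw [map_add]; push_cast; ring
  · intro r
    show ((B.coord i (2⁻¹ * r) : ℚ) : ℝ) * s = ((B.coord i r : ℚ) : ℝ) * s / 2
    have h2 : (2⁻¹ : ℝ) * r = ((2⁻¹ : ℚ) : ℝ) • r := by norm_num
    rw [h2, Rat.cast_smul_eq_qsmul, map_smul, smul_eq_mul]
    push_cast; ring
  · show ((B.coord i (1 : ℝ) : ℚ) : ℝ) * s = 0
    have hB1 : B j = 1 := Module.Basis.extend_apply_self hr j
    have h0 : B.coord i (B j) = 0 := by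
      rw [Module.Basis.coord_apply, Module.Basis.repr_self, Finsupp.single_eq_of_ne hij]
    rw [hB1] at h0
    simp [h0]
  · show ((B.coord i l : ℚ) : ℝ) * s = s
    have hBl : B i = l := Module.Basis.extend_apply_self hr i
    have h0 : B.coord i (B i) = 1 := by
      rw [Module.Basis.coord_apply, Module.Basis.repr_self, Finsupp.single_eq_same]
    rw [hBl] at h0
    simp [h0]

lemma exists_psi' (u : X) (hu0 : u ≠ 0) : ∃ ψ : X →ₗ[ℝ] ℝ, ψ u = 1 := by
  have hind : LinearIndepOn ℝ id ({u} : Set X) :=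
    (linearIndepOn_singleton_iff ℝ).mpr hu0
  let B := Module.Basis.extend hind
  have hm : u ∈ hind.extend (Set.subset_univ _) := hind.subset_extend _ rfl
  refine ⟨(B.coord ⟨u, hm⟩), ?_⟩
  have hBu : B ⟨u, hm⟩ = u := Module.Basis.extend_apply_self hind _
  have h0 : B.coord ⟨u, hm⟩ (B ⟨u, hm⟩) = 1 := by
    rw [Module.Basis.coord_apply, Module.Basis.repr_self, Finsupp.single_eq_same]
  rwa [hBu] at h0


/-- for irrational `λ ∈ [0,1]` and `u ∈ D_Δ \ {0}`, `E[φ](λ,u) = +∞`. -/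
theorem stmt15 {X : Type*} [AddCommGroup X] [Module ℝ X] (D : Set X)
    (hD : Convex ℝ D) (hne : D.Nonempty) (φ : X → ℝ) (hφ : Admissible D φ)
    (l : ℝ) (hl : l ∈ Set.Icc (0 : ℝ) 1) (hirr : Irrational l)
    (u : X) (hu : u ∈ diffSet D) (hu0 : u ≠ 0) :
    Eerr D φ l u = ⊤ := by
  obtain ⟨-, -, f₀, hf₀⟩ := hφ
  obtain ⟨x, hx, y, hy, huxy⟩ := hu
  obtain ⟨ψ, hψu⟩ := exists_psi' u hu0
  rw [Eerr, sSup_eq_top]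
  intro b hb
  obtain ⟨t, hbt, -⟩ := EReal.exists_between_coe_real hb
  set base : ℝ := f₀ (l • x + (1 - l) • y) - l * f₀ x - (1 - l) * f₀ y with hbase
  obtain ⟨g, hgadd, hghalf, hg1, hgl⟩ := exists_g' l hirr (t + 1 - base)
  set F : X → ℝ := fun v => f₀ v + g (ψ v) with hF
  have hFJ : JCW D φ F := by
    intro x' hx' y' hy'
    have h1 := hf₀ x' hx' y' hy'
    have h2 : g (ψ ((2⁻¹ : ℝ) • (x' + y'))) = g (ψ x') / 2 + g (ψ y') / 2 := by
      rw [map_smul, smul_eq_mul, map_add, hghalf, hgadd]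
      ring
    simp only [hF]
    rw [h2]
    linarith
  have hpq : ψ x - ψ y = 1 := by
    rw [← map_sub, ← huxy, hψu]
  have hval : F (l • x + (1 - l) • y) - l * F x - (1 - l) * F y = t + 1 := by
    have hψc : ψ (l • x + (1 - l) • y) = ψ y + l := by
      rw [map_add, map_smul, map_smul, smul_eq_mul, smul_eq_mul]
      have : ψ x = ψ y + 1 := by linarith
      rw [this]; ring
    simp only [hF]
    rw [hψc, hgadd, hgl]
    have hx1 : g (ψ x) = g (ψ y) := by
      have : ψ x = ψ y + 1 := by linarith
      rw [this, hgadd, hg1, add_zero]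
    rw [hx1]
    simp only [hbase]
    ring
  refine ⟨((t + 1 : ℝ) : EReal), ⟨F, hFJ, x, hx, y, hy, huxy.symm, by rw [hval]⟩, ?_⟩
  calc b < (t : EReal) := hbt
    _ < ((t + 1 : ℝ) : EReal) := by exact_mod_cast (by linarith : t < t + 1)
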